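/- arXiv:1503.05800 — 4 statements merged into one kernel-verified Lean document; each statement's English description precedes it below -/
import Mathlib

section
/- For every generator g : ZMod N → ℂ, every N×N complex matrix H with rows and columns indexed by ZMod N, and every λ = (q,j) ∈ (ZMod N)², one has N·⟨g_λ, H g_λ⟩ = ∑_{(p,ℓ) ∈ (ZMod N)²} ω^{−j·p} · ω^{ℓ·q} · ℋ̂_p(ℓ) · ⟨g, Π_{(p,ℓ)} g⟩, where ℋ̂_p is the discrete Fourier transform of the p-th band ℋ_p of H. -/
open Complex Finset

/-- `gw N m = ω^m` where `ω = exp(2πi/N)` and `m : ZMod N`. -/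
noncomputable def gw (N : ℕ) (m : ZMod N) : ℂ :=
  Complex.exp (2 * Real.pi * Complex.I * (m.val : ℂ) / (N : ℂ))

/-- Translation operator `(T_p x)(n) = x(n-p)`. -/
def Tr (N : ℕ) (p : ZMod N) (x : ZMod N → ℂ) : ZMod N → ℂ :=
  fun n => x (n - p)

/-- Modulation operator `(M_ℓ x)(n) = ω^{ℓ·n} x(n)`. -/
noncomputable def Md (N : ℕ) (l : ZMod N) (x : ZMod N → ℂ) : ZMod N → ℂ :=
  fun n => gw N (l * n) * x n

/-- Time-frequency shift `Π_{(p,ℓ)} = M_ℓ ∘ T_p`. -/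
noncomputable def Pig (N : ℕ) (p l : ZMod N) (x : ZMod N → ℂ) : ZMod N → ℂ :=
  Md N l (Tr N p x)

/-- Inner product, conjugate linear in the first argument. -/
noncomputable def inn (N : ℕ) [NeZero N] (x y : ZMod N → ℂ) : ℂ :=
  ∑ j : ZMod N, (starRingEnd ℂ) (x j) * y j

/-- The `p`-th band of a matrix `H`, `ℋ_p(i) = H i (i-p)`. -/
def band (N : ℕ) (H : Matrix (ZMod N) (ZMod N) ℂ) (p : ZMod N) : ZMod N → ℂ :=
  fun i => H i (i - p)

/-- The discrete Fourier transform `x̂(j) = ∑_n x(n) ω^{-nj}`. -/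
noncomputable def dft (N : ℕ) [NeZero N] (x : ZMod N → ℂ) : ZMod N → ℂ :=
  fun j => ∑ n : ZMod N, x n * gw N (-(n * j))

noncomputable def zeta (N : ℕ) : ℂ := Complex.exp (2 * Real.pi * Complex.I / N)

lemma gw_eq_pow (N : ℕ) (m : ZMod N) : gw N m = zeta N ^ m.val := by
  rw [zeta, ← Complex.exp_nat_mul, gw]; ring_nf

lemma zeta_pow (N : ℕ) [NeZero N] : zeta N ^ N = 1 :=
  (Complex.isPrimitiveRoot_exp N (NeZero.ne N)).pow_eq_one

lemma gw_zero (N : ℕ) [NeZero N] : gw N 0 = 1 := by simp [gw]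

lemma gw_add (N : ℕ) [NeZero N] (a b : ZMod N) : gw N (a + b) = gw N a * gw N b := by
  rw [gw_eq_pow, gw_eq_pow, gw_eq_pow, ← pow_add, ZMod.val_add]
  conv_rhs => rw [← Nat.mod_add_div (a.val + b.val) N, pow_add, pow_mul, zeta_pow, one_pow, mul_one]

lemma gw_ne_zero (N : ℕ) (m : ZMod N) : gw N m ≠ 0 := Complex.exp_ne_zero _

lemma gw_neg (N : ℕ) [NeZero N] (m : ZMod N) : gw N (-m) = (gw N m)⁻¹ := by
  refine eq_inv_of_mul_eq_one_left ?_
  rw [← gw_add]; simp [gw_zero]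

lemma gw_conj (N : ℕ) [NeZero N] (m : ZMod N) :
    (starRingEnd ℂ) (gw N m) = gw N (-m) := by
  rw [gw_neg]
  simp only [gw, ← Complex.exp_conj, ← Complex.exp_neg]
  congr 1
  simp [map_div₀, map_ofNat, Complex.conj_natCast, -ZMod.natCast_val]
  ring

lemma gw_nsmul (N : ℕ) [NeZero N] (n : ℕ) (t : ZMod N) :
    gw N (n • t) = gw N t ^ n := by
  induction n with
  | zero => simp [gw_zero]
  | succ k ih => rw [succ_nsmul, gw_add, ih, pow_succ]

lemma gw_mul_val (N : ℕ) [NeZero N] (l t : ZMod N) :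
    gw N (l * t) = gw N t ^ l.val := by
  rw [← gw_nsmul]
  congr 1
  rw [nsmul_eq_mul]
  rw [ZMod.natCast_val, ZMod.cast_id]

lemma gw_eq_one_iff (N : ℕ) [NeZero N] (t : ZMod N) : gw N t = 1 ↔ t = 0 := by
  constructor
  · intro h
    by_contra ht
    have h1 : 0 < t.val := Nat.pos_of_ne_zero (fun hv => ht (by rwa [← ZMod.val_eq_zero]))
    have h2 : t.val < N := ZMod.val_lt t
    exact (Complex.isPrimitiveRoot_exp N (NeZero.ne N)).pow_ne_one_of_pos_of_lt h1.ne' h2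
      (by rw [← zeta, ← gw_eq_pow, h])
  · rintro rfl; exact gw_zero N

lemma sum_gw (N : ℕ) [NeZero N] (t : ZMod N) :
    ∑ l : ZMod N, gw N (l * t) = if t = 0 then (N : ℂ) else 0 := by
  split_ifs with ht
  · subst ht; simp [gw_zero]
  · have hne : gw N t ≠ 1 := fun h => ht ((gw_eq_one_iff N t).mp h)
    have : ∑ l : ZMod N, gw N (l * t) = ∑ k ∈ Finset.range N, gw N t ^ k := by
      simp_rw [gw_mul_val]
      exact Finset.sum_nbij' (fun l => l.val) (fun k => (k : ZMod N))
        (fun l _ => Finset.mem_range.mpr (ZMod.val_lt l)) (fun k _ => Finset.mem_univ _)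
        (fun l _ => by simp [ZMod.natCast_val, ZMod.cast_id])
        (fun k hk => ZMod.val_natCast_of_lt (Finset.mem_range.mp hk))
        (fun l _ => rfl)
    rw [this, geom_sum_eq hne]
    have : gw N t ^ N = 1 := by
      rw [gw_eq_pow, ← pow_mul, mul_comm, pow_mul, zeta_pow, one_pow]
    rw [this, sub_self, zero_div]

/-- `N ⟨g_λ, H g_λ⟩ = ∑_{p,ℓ} ω^{-jp} ω^{ℓq} ℋ̂_p(ℓ) ⟨g, Π_{(p,ℓ)} g⟩` for `λ = (q,j)`. -/
theorem Gabor_PhaseLift_is_FFT (N : ℕ) [NeZero N] (g : ZMod N → ℂ)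
    (H : Matrix (ZMod N) (ZMod N) ℂ) (q j : ZMod N) :
    (N : ℂ) * inn N (Pig N q j g) (H.mulVec (Pig N q j g)) =
      ∑ p : ZMod N, ∑ l : ZMod N,
        gw N (-(j * p)) * gw N (l * q) * dft N (band N H p) l * inn N g (Pig N p l g) := by
  classical
  set X : ZMod N → ZMod N → ℂ := fun n p =>
    gw N (-(j * p)) * H n (n - p) * (starRingEnd ℂ) (g (n - q)) * g (n - q - p) with hX
  have hL : inn N (Pig N q j g) (H.mulVec (Pig N q j g)) = ∑ n : ZMod N, ∑ p : ZMod N, X n p := by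
    simp only [inn, Pig, Md, Tr, Matrix.mulVec, dotProduct]
    refine Finset.sum_congr rfl fun n _ => ?_
    have hre : (∑ k : ZMod N, H n k * (gw N (j * k) * g (k - q)))
        = ∑ p : ZMod N, H n (n - p) * (gw N (j * (n - p)) * g (n - p - q)) :=
      (Fintype.sum_equiv (Equiv.subLeft n) _ _ (fun p => rfl)).symm
    rw [hre, Finset.mul_sum]
    refine Finset.sum_congr rfl fun p _ => ?_
    rw [hX]
    simp only [map_mul, gw_conj]
    have h1 : gw N (-(j * n)) * gw N (j * (n - p)) = gw N (-(j * p)) := by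
      rw [← gw_add]; congr 1; ring
    have h2 : n - p - q = n - q - p := by ring
    rw [h2, ← h1]; ring
  have hR : (∑ p : ZMod N, ∑ l : ZMod N,
        gw N (-(j * p)) * gw N (l * q) * dft N (band N H p) l * inn N g (Pig N p l g))
      = ∑ p : ZMod N, ∑ n : ZMod N, (N : ℂ) * X n p := by
    refine Finset.sum_congr rfl fun p _ => ?_
    simp only [dft, inn, Pig, Md, Tr, band]
    calc (∑ l : ZMod N,
            gw N (-(j * p)) * gw N (l * q) * (∑ n : ZMod N, H n (n - p) * gw N (-(n * l))) *
              (∑ m : ZMod N, (starRingEnd ℂ) (g m) * (gw N (l * m) * g (m - p))))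
        = ∑ l : ZMod N, ∑ m : ZMod N, ∑ n : ZMod N,
            gw N (-(j * p)) * gw N (l * q) * (H n (n - p) * gw N (-(n * l))) *
              ((starRingEnd ℂ) (g m) * (gw N (l * m) * g (m - p))) := by
          refine Finset.sum_congr rfl fun l _ => ?_
          rw [Finset.mul_sum]
          refine Finset.sum_congr rfl fun m _ => ?_
          rw [Finset.mul_sum, Finset.sum_mul]
      _ = ∑ n : ZMod N, ∑ m : ZMod N, ∑ l : ZMod N,
            gw N (-(j * p)) * gw N (l * q) * (H n (n - p) * gw N (-(n * l))) *
              ((starRingEnd ℂ) (g m) * (gw N (l * m) * g (m - p))) := by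
          rw [show (∑ l : ZMod N, ∑ m : ZMod N, ∑ n : ZMod N,
              gw N (-(j * p)) * gw N (l * q) * (H n (n - p) * gw N (-(n * l))) *
                ((starRingEnd ℂ) (g m) * (gw N (l * m) * g (m - p))))
            = ∑ m : ZMod N, ∑ n : ZMod N, ∑ l : ZMod N,
              gw N (-(j * p)) * gw N (l * q) * (H n (n - p) * gw N (-(n * l))) *
                ((starRingEnd ℂ) (g m) * (gw N (l * m) * g (m - p)))
            from (Finset.sum_comm).trans (Finset.sum_congr rfl fun m _ => Finset.sum_comm)]
          exact Finset.sum_comm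
      _ = ∑ n : ZMod N, ∑ m : ZMod N,
            (gw N (-(j * p)) * H n (n - p) * (starRingEnd ℂ) (g m) * g (m - p)) *
              (if q - n + m = 0 then (N : ℂ) else 0) := by
          refine Finset.sum_congr rfl fun n _ => Finset.sum_congr rfl fun m _ => ?_
          rw [← sum_gw N (q - n + m), Finset.mul_sum]
          refine Finset.sum_congr rfl fun l _ => ?_
          have h3 : gw N (l * q) * gw N (-(n * l)) * gw N (l * m) = gw N (l * (q - n + m)) := by
            rw [← gw_add, ← gw_add]; congr 1; ring
          rw [← h3]; ring
      _ = ∑ n : ZMod N, (N : ℂ) * X n p := by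
          refine Finset.sum_congr rfl fun n _ => ?_
          calc (∑ m : ZMod N,
                  (gw N (-(j * p)) * H n (n - p) * (starRingEnd ℂ) (g m) * g (m - p)) *
                    (if q - n + m = 0 then (N : ℂ) else 0))
              = ∑ m : ZMod N, if m = n - q then
                  (N : ℂ) * (gw N (-(j * p)) * H n (n - p) * (starRingEnd ℂ) (g m) * g (m - p))
                else 0 := by
                refine Finset.sum_congr rfl fun m _ => ?_
                by_cases hm : m = n - q
                · subst hm
                  have h0 : q - n + (n - q) = 0 := by ring
                  rw [h0, if_pos rfl, if_pos rfl]; ring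
                · have hne0 : q - n + m ≠ 0 := by
                    intro h
                    exact hm (by linear_combination h)
                  rw [if_neg hne0, if_neg hm, mul_zero]
            _ = (N : ℂ) * X n p := by
                rw [Finset.sum_ite_eq' Finset.univ (n - q), if_pos (Finset.mem_univ _), hX]
  rw [hL, hR, Finset.mul_sum, Finset.sum_comm]
  simp_rw [Finset.mul_sum]
end

section
/- Let g : ZMod N → ℂ be a generator for which there exists a fixed p̂ ∈ ZMod N with p̂ ≠ 0 such that ⟨g, Π_{(p̂,ℓ)} g⟩ = 0 for every ℓ ∈ ZMod N. Then the Gabor system (g_λ)_{λ ∈ (ZMod N)²} does not allow phase retrieval: there exist x, y : ZMod N → ℂ with |⟨x, g_λ⟩| = |⟨y, g_λ⟩| for every λ ∈ (ZMod N)², yet x ≠ c • y for every c ∈ ℂ with |c| = 1. -/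
open Complex Finset

lemma gw_eq (N : ℕ) (m : ZMod N) :
    gw N m = Complex.exp (2 * Real.pi * Complex.I / N) ^ m.val := by
  rw [← Complex.exp_nat_mul, gw]
  ring_nf

lemma gw_pow_mod (N : ℕ) [NeZero N] (k : ℕ) :
    Complex.exp (2 * Real.pi * Complex.I / N) ^ (k % N)
      = Complex.exp (2 * Real.pi * Complex.I / N) ^ k := by
  have hz : Complex.exp (2 * Real.pi * Complex.I / N) ^ N = 1 :=
    (Complex.isPrimitiveRoot_exp N (NeZero.ne N)).pow_eq_one
  conv_rhs => rw [← Nat.div_add_mod k N]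
  rw [pow_add, pow_mul, hz, one_pow, one_mul]

lemma gw_natCast (N : ℕ) [NeZero N] (k : ℕ) :
    gw N (k : ZMod N) = Complex.exp (2 * Real.pi * Complex.I / N) ^ k := by
  rw [gw_eq, ZMod.val_natCast, gw_pow_mod]

lemma sum_gw_eq_zero (N : ℕ) [NeZero N] (m : ZMod N) (hm : m ≠ 0) :
    ∑ l : ZMod N, gw N (l * m) = 0 := by
  set ζ := Complex.exp (2 * Real.pi * Complex.I / N) with hζ
  have hprim := Complex.isPrimitiveRoot_exp N (NeZero.ne N)
  have hv0 : m.val ≠ 0 := fun h => hm (by rwa [← ZMod.val_eq_zero])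
  have hc1 : ζ ^ m.val ≠ 1 := by
    intro h
    have hd := (IsPrimitiveRoot.pow_eq_one_iff_dvd hprim m.val).mp h
    have := Nat.le_of_dvd (Nat.pos_of_ne_zero hv0) hd
    exact absurd (ZMod.val_lt m) (by omega)
  have hstep : ∀ l : ZMod N, gw N (l * m) = (ζ ^ m.val) ^ l.val := by
    intro l
    rw [gw_eq, ZMod.val_mul, gw_pow_mod, mul_comm l.val m.val, pow_mul]
  rw [Finset.sum_congr rfl (fun l _ => hstep l)]
  have hsum : ∑ l : ZMod N, (ζ ^ m.val) ^ l.val = ∑ i ∈ range N, (ζ ^ m.val) ^ i := by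
    refine Finset.sum_nbij' (fun l : ZMod N => l.val) (fun i : ℕ => (i : ZMod N))
      ?_ ?_ ?_ ?_ ?_ <;>
      simp (config := {contextual := true}) [ZMod.val_lt, ZMod.val_natCast, Nat.mod_eq_of_lt]
  rw [hsum, geom_sum_eq hc1, ← pow_mul, mul_comm, pow_mul, hprim.pow_eq_one, one_pow,
    sub_self, zero_div]

lemma sum_gw_ite (N : ℕ) [NeZero N] (m : ZMod N) :
    ∑ l : ZMod N, gw N (l * m) = if m = 0 then (N : ℂ) else 0 := by
  split_ifs with h
  · subst h; simp [gw_zero]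
  · exact sum_gw_eq_zero N m h

lemma band_pointwise (N : ℕ) [NeZero N] (g : ZMod N → ℂ) (phat : ZMod N)
    (hg : ∀ l : ZMod N, inn N g (Pig N phat l g) = 0) (j0 : ZMod N) :
    (starRingEnd ℂ) (g j0) * g (j0 - phat) = 0 := by
  have h0 : ∑ l : ZMod N, gw N (-(l * j0)) * inn N g (Pig N phat l g) = 0 := by
    simp [hg]
  have h1 : ∀ l : ZMod N, gw N (-(l * j0)) * inn N g (Pig N phat l g)
      = ∑ j : ZMod N, (starRingEnd ℂ) (g j) * g (j - phat) * gw N (l * (j - j0)) := by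
    intro l
    rw [inn, Finset.mul_sum]
    refine Finset.sum_congr rfl fun j _ => ?_
    have e : l * (j - j0) = -(l * j0) + l * j := by ring
    rw [e, gw_add]
    simp only [Pig, Md, Tr]
    ring
  rw [Finset.sum_congr rfl (fun l _ => h1 l), Finset.sum_comm] at h0
  have h2 : ∀ j : ZMod N, ∑ l : ZMod N, (starRingEnd ℂ) (g j) * g (j - phat) * gw N (l * (j - j0))
      = if j = j0 then (starRingEnd ℂ) (g j) * g (j - phat) * N else 0 := by
    intro j
    rw [← Finset.mul_sum, sum_gw_ite]
    by_cases hj : j = j0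
    · simp [hj]
    · have hs : j - j0 ≠ 0 := sub_ne_zero.mpr hj
      simp [hj, hs]
  rw [Finset.sum_congr rfl (fun j _ => h2 j), Finset.sum_ite_eq' univ j0] at h0
  simp only [mem_univ, if_true] at h0
  have hNne : (N : ℂ) ≠ 0 := Nat.cast_ne_zero.mpr (NeZero.ne N)
  rcases mul_eq_zero.mp h0 with h | h
  · exact h
  · exact absurd h hNne

lemma inn_single (N : ℕ) [NeZero N] (a : ZMod N) (c : ℂ) (h : ZMod N → ℂ) :
    inn N (Pi.single a c) h = (starRingEnd ℂ) c * h a := by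
  simp [inn, Pi.single_apply, apply_ite (starRingEnd ℂ), ite_mul, Finset.sum_ite_eq']

/-- If `⟨g, Π_{(p̂,ℓ)} g⟩ = 0` for some fixed `p̂ ≠ 0` and all `ℓ`, then the
Gabor system does not allow phase retrieval. -/
theorem no_phase_retrieval_vanishing_band (N : ℕ) [NeZero N] (hN : 2 ≤ N)
    (g : ZMod N → ℂ) (phat : ZMod N) (hphat : phat ≠ 0)
    (hg : ∀ l : ZMod N, inn N g (Pig N phat l g) = 0) :
    ∃ x y : ZMod N → ℂ,
      (∀ p l : ZMod N,
        ‖inn N x (Pig N p l g)‖ = ‖inn N y (Pig N p l g)‖) ∧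
      ∀ c : ℂ, ‖c‖ = 1 → x ≠ c • y := by
  refine ⟨Pi.single 0 1 + Pi.single phat 1, Pi.single 0 1 - Pi.single phat 1, ?_, ?_⟩
  · intro p l
    set h := Pig N p l g with hh
    have hx : inn N (Pi.single 0 1 + Pi.single phat 1) h = h 0 + h phat := by
      simp [inn, Pi.single_apply, apply_ite (starRingEnd ℂ), ite_mul, add_mul, Finset.sum_add_distrib, Finset.sum_ite_eq']
    have hy : inn N (Pi.single 0 1 - Pi.single phat 1) h = h 0 - h phat := by
      simp [inn, Pi.single_apply, apply_ite (starRingEnd ℂ), ite_mul, sub_mul, Finset.sum_sub_distrib, Finset.sum_ite_eq']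
    rw [hx, hy]
    have hkey := band_pointwise N g phat hg (phat - p)
    have : g (phat - p) = 0 ∨ g (-p) = 0 := by
      rcases mul_eq_zero.mp hkey with h' | h'
      · exact Or.inl (by simpa using h')
      · right; rw [← h']; congr 1; ring
    have h0v : h 0 = g (-p) := by
      simp [hh, Pig, Md, Tr, gw_zero, zero_sub]
    have hpv : h phat = gw N (l * phat) * g (phat - p) := by
      simp [hh, Pig, Md, Tr]
    rcases this with h' | h'
    · rw [hpv, h', mul_zero, add_zero, sub_zero]
    · rw [h0v, h', zero_add, zero_sub, norm_neg]
  · intro c _ hxy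
    have h1 := congrFun hxy 0
    have h2 := congrFun hxy phat
    simp [Pi.single_apply, hphat, Ne.symm hphat] at h1 h2
    rw [← h1] at h2
    norm_num at h2
end

section
/- Let g : ZMod N → ℂ be a short window: suppose there exist a ∈ ZMod N and a natural number W with 1 ≤ W and 2·W ≤ N such that g(n) = 0 whenever n is not of the form a + (i : ZMod N) for some natural number i < W. Then the Gabor system (g_λ)_{λ ∈ (ZMod N)²} does not allow phase retrieval: there exist x, y : ZMod N → ℂ with |⟨x, g_λ⟩| = |⟨y, g_λ⟩| for every λ ∈ (ZMod N)², yet x ≠ c • y for every c ∈ ℂ with |c| = 1. -/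
open Complex Finset

lemma key0 (N W : ℕ) [NeZero N] (hW1 : 1 ≤ W) (hW2 : 2 * W ≤ N)
    (g : ZMod N → ℂ) (a : ZMod N)
    (hsupp : ∀ n : ZMod N, (¬ ∃ i : ℕ, i < W ∧ n = a + (i : ℕ)) → g n = 0)
    (p : ZMod N) : g (0 - p) = 0 ∨ g ((W : ZMod N) - p) = 0 := by
  by_contra h
  push_neg at h
  obtain ⟨h1, h2⟩ := h
  have e1 : ∃ i : ℕ, i < W ∧ (0 : ZMod N) - p = a + (i : ℕ) := by
    by_contra hc; exact h1 (hsupp _ hc)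
  have e2 : ∃ i : ℕ, i < W ∧ (W : ZMod N) - p = a + (i : ℕ) := by
    by_contra hc; exact h2 (hsupp _ hc)
  obtain ⟨i, hi, hieq⟩ := e1
  obtain ⟨j, hj, hjeq⟩ := e2
  have key : ((W + i : ℕ) : ZMod N) = ((j : ℕ) : ZMod N) := by
    push_cast
    have : ((W : ZMod N) - p) - ((0 : ZMod N) - p) = (a + j) - (a + i) := by
      rw [hieq, hjeq]
    have h' : (W : ZMod N) = (j : ZMod N) - (i : ZMod N) := by
      ring_nf at this
      linear_combination this
    linear_combination h'
  rw [ZMod.natCast_eq_natCast_iff] at key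
  have h' : (W + i) % N = j % N := key
  rw [Nat.mod_eq_of_lt (by omega), Nat.mod_eq_of_lt (by omega)] at h'
  omega

/-- A short window (support contained in a window of length `W` with `2W ≤ N`)
does not generate a Gabor system allowing phase retrieval. -/
theorem no_phase_retrieval_short_window (N : ℕ) [NeZero N] (hN : 2 ≤ N)
    (g : ZMod N → ℂ) (a : ZMod N) (W : ℕ) (hW1 : 1 ≤ W) (hW2 : 2 * W ≤ N)
    (hsupp : ∀ n : ZMod N, (¬ ∃ i : ℕ, i < W ∧ n = a + (i : ZMod N)) → g n = 0) :
    ∃ x y : ZMod N → ℂ,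
      (∀ p l : ZMod N,
        ‖inn N x (Pig N p l g)‖ = ‖inn N y (Pig N p l g)‖) ∧
      ∀ c : ℂ, ‖c‖ = 1 → x ≠ c • y := by
  have hWne : ((W : ZMod N)) ≠ 0 := by
    rw [Ne, ZMod.natCast_eq_zero_iff]
    intro hdvd
    have := Nat.le_of_dvd (by omega) hdvd
    omega
  refine ⟨fun n => (if n = 0 then 1 else 0) + (if n = (W : ZMod N) then 1 else 0),
          fun n => (if n = 0 then 1 else 0) - (if n = (W : ZMod N) then 1 else 0),
          ?_, ?_⟩
  · intro p l
    set h := Pig N p l g with hh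
    have hx : inn N (fun n => (if n = 0 then (1:ℂ) else 0) + (if n = (W : ZMod N) then 1 else 0)) h
        = h 0 + h (W : ZMod N) := by
      unfold inn
      simp only [map_add, apply_ite (starRingEnd ℂ), map_one, map_zero, add_mul,
        ite_mul, one_mul, zero_mul, Finset.sum_add_distrib, Finset.sum_ite_eq',
        Finset.mem_univ, if_true]
    have hy : inn N (fun n => (if n = 0 then (1:ℂ) else 0) - (if n = (W : ZMod N) then 1 else 0)) h
        = h 0 - h (W : ZMod N) := by
      unfold inn
      simp only [map_sub, apply_ite (starRingEnd ℂ), map_one, map_zero, sub_mul,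
        ite_mul, one_mul, zero_mul, Finset.sum_sub_distrib, Finset.sum_ite_eq',
        Finset.mem_univ, if_true]
    rw [hx, hy]
    rcases key0 N W hW1 hW2 g a hsupp p with h0 | hW
    · have : h 0 = 0 := by
        rw [zero_sub] at h0
        simp only [hh, Pig, Md, Tr, zero_sub, h0, mul_zero]
      rw [this, zero_add, zero_sub, norm_neg]
    · have : h (W : ZMod N) = 0 := by
        simp only [hh, Pig, Md, Tr, hW, mul_zero]
      rw [this, add_zero, sub_zero]
  · intro c hc hxy
    have h0 := congrFun hxy 0
    have hW := congrFun hxy (W : ZMod N)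
    simp [hWne, Ne.symm hWne] at h0 hW
    rw [← h0] at hW
    norm_num at hW
end

section
/- Let f_1,…,f_m ∈ ℂ^N be measurement vectors, D an N×d complex matrix with columns d_1,…,d_d, and k a natural number with 2k ≤ d. Suppose that for every subset 𝒦 ⊆ Fin d with |𝒦| = 2k there is no nonzero Hermitian N×N matrix H with rank H ≤ 2, column space of H contained in W_𝒦 = span{d_i : i ∈ 𝒦}, and ⟨f_i, H f_i⟩ = 0 for all i = 1,…,m. Then (f_i)_{i=1}^m allows kD-phase retrieval: for all x, y ∈ C_{k,D}, if |⟨f_i, x⟩| = |⟨f_i, y⟩| for all i, then there exists c ∈ ℂ with |c| = 1 and x = c • y. -/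
open Complex Finset Matrix

/-- Inner product on `ℂ^N`, conjugate linear in the first argument. -/
noncomputable def innF (N : ℕ) (x y : Fin N → ℂ) : ℂ :=
  ∑ j : Fin N, (starRingEnd ℂ) (x j) * y j

/-- The class of signals `k`-sparse in the dictionary `D`. -/
def sparseInDict (N d k : ℕ) (D : Matrix (Fin N) (Fin d) ℂ) (x : Fin N → ℂ) : Prop :=
  ∃ z : Fin d → ℂ, Set.ncard {i | z i ≠ 0} ≤ k ∧ x = D.mulVec z

/-- The span of the dictionary columns indexed by `𝒦`. -/
noncomputable def dictSpan (N d : ℕ) (D : Matrix (Fin N) (Fin d) ℂ) (𝒦 : Finset (Fin d)) :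
    Submodule ℂ (Fin N → ℂ) :=
  Submodule.span ℂ {v | ∃ i ∈ 𝒦, v = Dᵀ i}

lemma innF_conj (N : ℕ) (x y : Fin N → ℂ) :
    innF N x y = (starRingEnd ℂ) (innF N y x) := by
  simp only [innF, map_sum, _root_.map_mul, Complex.conj_conj]
  exact Finset.sum_congr rfl fun j _ => (mul_comm _ _)

lemma mulVec_mem_span {N d : ℕ} (D : Matrix (Fin N) (Fin d) ℂ) (z : Fin d → ℂ)
    (𝒦 : Finset (Fin d)) (hz : ∀ i, z i ≠ 0 → i ∈ 𝒦) :
    D.mulVec z ∈ dictSpan N d D 𝒦 := by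
  have : D.mulVec z = ∑ i : Fin d, z i • Dᵀ i := by
    funext j
    simp only [Matrix.mulVec, dotProduct, Finset.sum_apply, Pi.smul_apply, smul_eq_mul,
      Matrix.transpose_apply]
    exact Finset.sum_congr rfl fun i _ => mul_comm _ _
  rw [this]
  refine Submodule.sum_mem _ fun i _ => ?_
  by_cases hzi : z i = 0
  · simp [hzi]
  · exact Submodule.smul_mem _ _ (Submodule.subset_span ⟨i, hz i hzi, rfl⟩)

/-- Sufficiency part of the sparse PhaseLift injectivity condition: if for
every `𝒦` with `|𝒦| = 2k` the kernel of the PhaseLift operator contains no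
nonzero Hermitian matrix of rank at most 2 with range in `W_𝒦`, then the
measurements allow `kD`-phase retrieval. -/
theorem sparse_PhaseLift_sufficient (N d m k : ℕ) (hk : 2 * k ≤ d)
    (f : Fin m → (Fin N → ℂ)) (D : Matrix (Fin N) (Fin d) ℂ)
    (h : ∀ 𝒦 : Finset (Fin d), 𝒦.card = 2 * k →
      ¬ ∃ H : Matrix (Fin N) (Fin N) ℂ, H.IsHermitian ∧ H ≠ 0 ∧ H.rank ≤ 2 ∧
          LinearMap.range H.mulVecLin ≤ dictSpan N d D 𝒦 ∧
          ∀ i : Fin m, innF N (f i) (H.mulVec (f i)) = 0) :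
    ∀ x y : Fin N → ℂ, sparseInDict N d k D x → sparseInDict N d k D y →
      (∀ i : Fin m, ‖innF N (f i) x‖ = ‖innF N (f i) y‖) →
      ∃ c : ℂ, ‖c‖ = 1 ∧ x = c • y := by
  classical
  intro x y hx hy habs
  obtain ⟨z1, hz1, hxz⟩ := hx
  obtain ⟨z2, hz2, hyz⟩ := hy
  set s1 : Finset (Fin d) := Finset.univ.filter (fun i => z1 i ≠ 0) with hs1
  set s2 : Finset (Fin d) := Finset.univ.filter (fun i => z2 i ≠ 0) with hs2
  have hs1card : s1.card ≤ k := by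
    have : {i | z1 i ≠ 0}.ncard = s1.card := by
      rw [Set.ncard_eq_toFinset_card']
      congr 1
      ext i
      simp [hs1]
    omega
  have hs2card : s2.card ≤ k := by
    have : {i | z2 i ≠ 0}.ncard = s2.card := by
      rw [Set.ncard_eq_toFinset_card']
      congr 1
      ext i
      simp [hs2]
    omega
  have hscard : (s1 ∪ s2).card ≤ 2 * k := by
    have := Finset.card_union_le s1 s2
    omega
  obtain ⟨𝒦, h𝒦sub, h𝒦card⟩ := Finset.exists_superset_card_eq hscard (by simpa using hk)
  -- the PhaseLift matrix
  set H : Matrix (Fin N) (Fin N) ℂ :=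
    Matrix.vecMulVec x (star x) - Matrix.vecMulVec y (star y) with hH
  have hHmul : ∀ v : Fin N → ℂ, H.mulVec v = innF N x v • x - innF N y v • y := by
    intro v
    rw [hH, Matrix.sub_mulVec]
    funext i
    simp only [Pi.sub_apply, Matrix.mulVec, dotProduct, Matrix.vecMulVec_apply,
      Pi.star_apply, Pi.smul_apply, smul_eq_mul, innF]
    rw [Finset.sum_mul, Finset.sum_mul]
    congr 1 <;> exact Finset.sum_congr rfl fun j _ => by simp [RCLike.star_def]; ring
  have hxmem : x ∈ dictSpan N d D 𝒦 := by
    rw [hxz]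
    exact mulVec_mem_span D z1 𝒦 fun i hi =>
      h𝒦sub (Finset.mem_union_left _ (by simp [hs1, hi]))
  have hymem : y ∈ dictSpan N d D 𝒦 := by
    rw [hyz]
    exact mulVec_mem_span D z2 𝒦 fun i hi =>
      h𝒦sub (Finset.mem_union_right _ (by simp [hs2, hi]))
  have hH0 : H = 0 := by
    by_contra hne
    apply h 𝒦 h𝒦card
    refine ⟨H, ?_, hne, ?_, ?_, ?_⟩
    · -- Hermitian
      ext i j
      simp only [hH, Matrix.conjTranspose_apply, Matrix.sub_apply, Matrix.vecMulVec_apply,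
        Pi.star_apply, star_sub, star_mul', star_star]
      ring
    · -- rank ≤ 2
      have hrange : LinearMap.range H.mulVecLin ≤ Submodule.span ℂ {x, y} := by
        rintro _ ⟨v, rfl⟩
        rw [Matrix.mulVecLin_apply, hHmul]
        exact sub_mem
          (Submodule.smul_mem _ _ (Submodule.subset_span (Set.mem_insert _ _)))
          (Submodule.smul_mem _ _ (Submodule.subset_span (Set.mem_insert_of_mem _ rfl)))
      have h1 : H.rank ≤ Module.finrank ℂ (Submodule.span ℂ ({x, y} : Set (Fin N → ℂ))) :=
        Submodule.finrank_mono hrange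
      refine h1.trans ?_
      refine (finrank_span_le_card _).trans ?_
      have : ({x, y} : Set (Fin N → ℂ)).toFinset ⊆ {x, y} := by
        intro v hv
        simp only [Set.mem_toFinset, Set.mem_insert_iff, Set.mem_singleton_iff] at hv
        simpa [Finset.mem_insert, Finset.mem_singleton] using hv
      calc ({x, y} : Set (Fin N → ℂ)).toFinset.card ≤ ({x, y} : Finset (Fin N → ℂ)).card :=
            Finset.card_le_card this
        _ ≤ 2 := Finset.card_insert_le _ _ |>.trans (by simp)
    · -- range in dictSpan
      rintro _ ⟨v, rfl⟩
      rw [Matrix.mulVecLin_apply, hHmul]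
      exact sub_mem (Submodule.smul_mem _ _ hxmem) (Submodule.smul_mem _ _ hymem)
    · -- measurements vanish
      intro i
      have hx' : innF N x (f i) = (starRingEnd ℂ) (innF N (f i) x) := innF_conj _ _ _
      have hy' : innF N y (f i) = (starRingEnd ℂ) (innF N (f i) y) := innF_conj _ _ _
      have : innF N (f i) (H.mulVec (f i))
          = innF N x (f i) * innF N (f i) x - innF N y (f i) * innF N (f i) y := by
        rw [hHmul]
        simp only [innF, Pi.sub_apply, Pi.smul_apply, smul_eq_mul]
        rw [Finset.mul_sum, Finset.mul_sum, ← Finset.sum_sub_distrib]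
        exact Finset.sum_congr rfl fun j _ => by ring
      rw [this, hx', hy']
      have h1 : (starRingEnd ℂ) (innF N (f i) x) * innF N (f i) x
          = (Complex.normSq (innF N (f i) x) : ℂ) := by
        rw [mul_comm, Complex.mul_conj]
      have h2 : (starRingEnd ℂ) (innF N (f i) y) * innF N (f i) y
          = (Complex.normSq (innF N (f i) y) : ℂ) := by
        rw [mul_comm, Complex.mul_conj]
      rw [h1, h2]
      have : Complex.normSq (innF N (f i) x) = Complex.normSq (innF N (f i) y) := by
        rw [← Complex.sq_norm, ← Complex.sq_norm, habs i]
      rw [this, sub_self]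
  -- From H = 0 deduce x = c • y
  have hentry : ∀ i j, x i * (starRingEnd ℂ) (x j) = y i * (starRingEnd ℂ) (y j) := by
    intro i j
    have := congrFun (congrFun hH0 i) j
    simp only [hH, Matrix.sub_apply, Matrix.vecMulVec_apply, Pi.star_apply,
      Matrix.zero_apply, sub_eq_zero, RCLike.star_def] at this
    exact this
  by_cases hy0 : y = 0
  · refine ⟨1, by simp, ?_⟩
    have hx0 : x = 0 := by
      funext i
      have := hentry i i
      rw [hy0] at this
      simp only [Pi.zero_apply, mul_zero, zero_mul, Complex.mul_conj] at this
      exact Complex.normSq_eq_zero.mp (by exact_mod_cast this)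
    rw [hx0, hy0]; simp
  · obtain ⟨j, hj⟩ : ∃ j, y j ≠ 0 := by
      by_contra hc
      push_neg at hc
      exact hy0 (funext hc)
    have hdiag := hentry j j
    rw [Complex.mul_conj, Complex.mul_conj] at hdiag
    have hnsq : Complex.normSq (x j) = Complex.normSq (y j) := by exact_mod_cast hdiag
    have hxj : x j ≠ 0 := by
      intro h0
      rw [h0, map_zero] at hnsq
      exact hj (Complex.normSq_eq_zero.mp hnsq.symm)
    refine ⟨x j / y j, ?_, ?_⟩
    · rw [norm_div]
      have : ‖x j‖ = ‖y j‖ := by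
        rw [Complex.norm_def, Complex.norm_def, hnsq]
      rw [this, div_self (by simpa using hj)]
    · funext i
      have hij := hentry i j
      have hcy : (starRingEnd ℂ) (y j) ≠ 0 := by simpa using hj
      -- x i * conj (x j) = y i * conj (y j), and |x j|² = |y j|²
      have key : x i * y j = y i * x j := by
        have h1 : x i * (starRingEnd ℂ) (x j) * x j = y i * (starRingEnd ℂ) (y j) * x j := by
          rw [hij]
        have h2 : x i * ((starRingEnd ℂ) (x j) * x j) = y i * (starRingEnd ℂ) (y j) * x j := by
          rw [← mul_assoc]; exact h1
        rw [mul_comm ((starRingEnd ℂ) (x j)) (x j), Complex.mul_conj] at h2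
        rw [hdiag] at h2
        have h3 : x i * y j * (starRingEnd ℂ) (y j) = y i * x j * (starRingEnd ℂ) (y j) := by
          rw [← Complex.mul_conj] at h2
          calc x i * y j * (starRingEnd ℂ) (y j) = x i * (y j * (starRingEnd ℂ) (y j)) := by ring
            _ = y i * (starRingEnd ℂ) (y j) * x j := h2
            _ = y i * x j * (starRingEnd ℂ) (y j) := by ring
        exact mul_right_cancel₀ hcy h3
      have : x i = x j / y j * y i := by
        field_simp
        linear_combination key
      simpa [Pi.smul_apply, smul_eq_mul] using this
end
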